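/- Let G = (V, wt) be a one-way bipartite weighted directed graph: V is partitioned into nonempty sets L and R such that wt(u,v) = 0 unless u ∈ L and v ∈ R, and every u ∈ L has ∑_{v ∈ R} wt(u,v) > 0. Define out(u) = ∑_{v'} wt(u,v') and PR_bip(v) = ∑_{u : out(u) > 0} wt(u,v)/out(u). Then there exist constants a > 0 and b such that the function v ↦ a·PR_bip(v) + b is a positive, sum-normalized (∑_v = 1) solution of the smoothed PageRank equation PR(v) = ∑_{u : out(u)>0} [(1−λ)/|V| + λ·wt(u,v)/out(u)]·PR(u) + ∑_{u : out(u)=0} (1/|V|)·PR(u), for any damping factor λ ∈ (0,1). -/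

import Mathlib

open Finset

/-- On a one-way bipartite graph, some affine transform (with positive leading
coefficient) of `PR_bip` is a positive, sum-normalized solution of the smoothed
PageRank equation. -/
theorem prBip_affine_solves_pagerank
    {V : Type*} [Fintype V] [Nonempty V]
    (wt : V → V → ℝ) (L R : Finset V) (lam : ℝ)
    (hlam : 0 < lam) (hlam' : lam < 1)
    (hLne : L.Nonempty) (hRne : R.Nonempty)
    (hcover : ∀ v : V, v ∈ L ∨ v ∈ R)
    (hdisj : ∀ v : V, ¬(v ∈ L ∧ v ∈ R))
    (hnn : ∀ u v : V, 0 ≤ wt u v)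
    (hbip : ∀ u v : V, wt u v ≠ 0 → u ∈ L ∧ v ∈ R)
    (hposout : ∀ u ∈ L, 0 < ∑ v : V, wt u v)
    (out : V → ℝ) (hout : ∀ u : V, out u = ∑ v : V, wt u v)
    (PRbip : V → ℝ)
    (hPRbip : ∀ v : V,
      PRbip v = ∑ u ∈ univ.filter (fun u => 0 < out u), wt u v / out u) :
    ∃ a b : ℝ, 0 < a ∧
      (∀ v : V, 0 < a * PRbip v + b) ∧
      (∑ v : V, (a * PRbip v + b)) = 1 ∧
      (∀ v : V, a * PRbip v + b =
        (∑ u ∈ univ.filter (fun u => 0 < out u),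
          ((1 - lam) / (Fintype.card V : ℝ) + lam * wt u v / out u)
            * (a * PRbip u + b)) +
        ∑ u ∈ univ.filter (fun u => out u = 0),
          (1 / (Fintype.card V : ℝ)) * (a * PRbip u + b)) := by
  classical
  set n : ℝ := (Fintype.card V : ℝ) with hn
  have hn0 : 0 < n := by
    rw [hn]
    exact_mod_cast Fintype.card_pos (α := V)
  have houtL : ∀ u : V, 0 < out u ↔ u ∈ L := by
    intro u
    constructor
    · intro h
      by_contra hu
      have h0 : out u = 0 := by
        rw [hout]
        apply Finset.sum_eq_zero
        intro v _
        by_contra hw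
        exact hu (hbip u v hw).1
      linarith
    · intro h
      rw [hout]; exact hposout u h
  have hfilterL : univ.filter (fun u => 0 < out u) = L := by
    ext u; simp [houtL]
  have hfilterR : univ.filter (fun u => out u = 0) = R := by
    ext u
    simp only [mem_filter, mem_univ, true_and]
    constructor
    · intro h
      rcases hcover u with hu | hu
      · exfalso
        have := (houtL u).2 hu
        linarith
      · exact hu
    · intro h
      have h1 : ¬ 0 < out u := fun hp => hdisj u ⟨(houtL u).1 hp, h⟩
      have h2 : 0 ≤ out u := by
        rw [hout]; exact Finset.sum_nonneg fun v _ => hnn u v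
      linarith
  have hPRL : ∀ v ∈ L, PRbip v = 0 := by
    intro v hv
    rw [hPRbip, hfilterL]
    apply Finset.sum_eq_zero
    intro u _
    have hw : wt u v = 0 := by
      by_contra hw
      exact hdisj v ⟨hv, (hbip u v hw).2⟩
    rw [hw, zero_div]
  have hPRnn : ∀ v : V, 0 ≤ PRbip v := by
    intro v
    rw [hPRbip, hfilterL]
    apply Finset.sum_nonneg
    intro u hu
    exact div_nonneg (hnn u v) (le_of_lt ((houtL u).2 hu))
  have hrow : ∀ u ∈ L, ∑ v : V, wt u v / out u = 1 := by
    intro u hu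
    rw [← Finset.sum_div, ← hout, div_self (ne_of_gt ((houtL u).2 hu))]
  have hsumPR : ∑ v : V, PRbip v = (L.card : ℝ) := by
    calc ∑ v : V, PRbip v = ∑ v : V, ∑ u ∈ L, wt u v / out u := by
          apply Finset.sum_congr rfl
          intro v _
          rw [hPRbip, hfilterL]
      _ = ∑ u ∈ L, ∑ v : V, wt u v / out u := Finset.sum_comm
      _ = ∑ u ∈ L, (1 : ℝ) := Finset.sum_congr rfl hrow
      _ = (L.card : ℝ) := by simp
  have hdisjLR : Disjoint L R := by
    rw [Finset.disjoint_left]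
    intro v hv hv'
    exact hdisj v ⟨hv, hv'⟩
  have huniv : (univ : Finset V) = L ∪ R := by
    ext v
    simp only [mem_univ, mem_union, true_iff]
    exact hcover v
  have hcard : n = (L.card : ℝ) + (R.card : ℝ) := by
    rw [hn]
    rw [← Finset.card_univ, huniv, Finset.card_union_of_disjoint hdisjLR]
    push_cast; ring
  set cL : ℝ := (L.card : ℝ) with hcL
  have hcL0 : 0 ≤ cL := Nat.cast_nonneg _
  have hden : 0 < lam * cL + n := by nlinarith
  set b : ℝ := 1 / (lam * cL + n) with hb
  have hb0 : 0 < b := by rw [hb]; exact one_div_pos.mpr hden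
  refine ⟨lam * b, b, mul_pos hlam hb0, ?_, ?_, ?_⟩
  · intro v
    have h1 := mul_nonneg (mul_nonneg hlam.le hb0.le) (hPRnn v)
    linarith
  · rw [Finset.sum_add_distrib, ← Finset.mul_sum, hsumPR]
    simp only [Finset.sum_const, Finset.card_univ, nsmul_eq_mul]
    rw [hb]
    field_simp
    rw [hn]
  · intro v
    have hsumR : ∑ u ∈ R, PRbip u = cL := by
      have : ∑ u ∈ L, PRbip u + ∑ u ∈ R, PRbip u = cL := by
        rw [← Finset.sum_union hdisjLR, ← huniv, hsumPR]
      have hz : ∑ u ∈ L, PRbip u = 0 := Finset.sum_eq_zero hPRL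
      linarith
    rw [hfilterL, hfilterR]
    have hL1 : ∑ u ∈ L, ((1 - lam) / n + lam * wt u v / out u) * (lam * b * PRbip u + b)
        = (1 - lam) / n * cL * b + lam * b * PRbip v := by
      calc ∑ u ∈ L, ((1 - lam) / n + lam * wt u v / out u) * (lam * b * PRbip u + b)
          = ∑ u ∈ L, ((1 - lam) / n * b + lam * b * (wt u v / out u)) := by
            apply Finset.sum_congr rfl
            intro u hu
            rw [hPRL u hu]
            ring
        _ = (L.card : ℝ) * ((1 - lam) / n * b) + lam * b * ∑ u ∈ L, wt u v / out u := by
            rw [Finset.sum_add_distrib, Finset.sum_const, nsmul_eq_mul, ← Finset.mul_sum]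
        _ = (1 - lam) / n * cL * b + lam * b * PRbip v := by
            rw [hPRbip, hfilterL, ← hcL]
            ring
    have hR1 : ∑ u ∈ R, 1 / n * (lam * b * PRbip u + b)
        = 1 / n * (lam * b * cL + b * (R.card : ℝ)) := by
      rw [← Finset.mul_sum]
      congr 1
      rw [Finset.sum_add_distrib, ← Finset.mul_sum, hsumR]
      simp only [Finset.sum_const, nsmul_eq_mul]
      ring
    rw [hL1, hR1]
    have hnne : n ≠ 0 := ne_of_gt hn0
    have hcR : (R.card : ℝ) = n - cL := by linarith
    rw [hcR]
    field_simp
    ring
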